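/- Let x_{ki}u_i (i=1,...,n, k=1,...,p) be such that for each k, the variables x_{ki}u_i, i=1,...,n, are independent and symmetric. Let r = sqrt(2 log(4p/α)/n) with 0 < α < 1, and let d_{kk} > 0. Then with probability at least 1 − α/2, simultaneously for all k = 1,...,p: |(d_{kk}/n) ∑_{i=1}^n x_{ki} u_i| ≤ r · sqrt( max_{j=1,...,p} (d_{jj}^2/n) ∑_{i=1}^n x_{ji}^2 u_i^2 ). -/

import Mathlib

open MeasureTheory ProbabilityTheory Finset
open scoped ENNReal NNReal

noncomputable def stmt7rad (b : Bool) : ℝ := if b then 1 else -1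

lemma stmt7rad_sq (b : Bool) : stmt7rad b ^ 2 = 1 := by cases b <;> simp [stmt7rad]

lemma stmt7_mgf (n : ℕ) (a : Fin n → ℝ) (l : ℝ) :
    ∑ ε : Fin n → Bool, Real.exp (∑ i, l * (stmt7rad (ε i) * a i)) ≤
      2 ^ n * Real.exp (l ^ 2 * (∑ i, (a i) ^ 2) / 2) := by
  have h1 : ∀ ε : Fin n → Bool, Real.exp (∑ i, l * (stmt7rad (ε i) * a i)) =
      ∏ i, Real.exp (l * (stmt7rad (ε i) * a i)) := fun ε => Real.exp_sum _ _
  simp_rw [h1]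
  rw [← Fintype.piFinset_univ, ← Finset.prod_univ_sum (fun _ => (univ : Finset Bool))
    (fun i b => Real.exp (l * (stmt7rad b * a i)))]
  have h2 : ∀ i : Fin n, ∑ b : Bool, Real.exp (l * (stmt7rad b * a i)) ≤
      2 * Real.exp ((l * a i) ^ 2 / 2) := by
    intro i
    have : ∑ b : Bool, Real.exp (l * (stmt7rad b * a i)) = 2 * Real.cosh (l * a i) := by
      rw [Real.cosh_eq]
      simp [Fintype.sum_bool, stmt7rad]
      ring
    rw [this]
    have := Real.cosh_le_exp_half_sq (l * a i)
    nlinarith [Real.exp_pos ((l * a i) ^ 2 / 2)]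
  calc ∏ i, ∑ b : Bool, Real.exp (l * (stmt7rad b * a i))
      ≤ ∏ i : Fin n, 2 * Real.exp ((l * a i) ^ 2 / 2) := by
        refine Finset.prod_le_prod (fun i _ => ?_) (fun i _ => h2 i)
        positivity
    _ = 2 ^ n * Real.exp (l ^ 2 * (∑ i, (a i) ^ 2) / 2) := by
        rw [Finset.prod_mul_distrib, Finset.prod_const, ← Real.exp_sum]
        simp only [card_univ, Fintype.card_fin]
        congr 1
        rw [Finset.mul_sum, ← Finset.sum_div]
        congr 2
        exact Finset.sum_congr rfl fun i _ => by ring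

lemma stmt7_one_sided (n : ℕ) (a : Fin n → ℝ) (t : ℝ) (ht : 0 ≤ t)
    (hA : 0 < ∑ i, (a i) ^ 2) :
    ∑ ε : Fin n → Bool,
      (if t * Real.sqrt (∑ i, (a i) ^ 2) ≤ ∑ i, stmt7rad (ε i) * a i then (1 : ℝ) else 0) ≤
      2 ^ n * Real.exp (-(t ^ 2) / 2) := by
  set A := ∑ i, (a i) ^ 2 with hAdef
  have hsA : 0 < Real.sqrt A := Real.sqrt_pos.2 hA
  set l := t / Real.sqrt A with hldef
  have hl : 0 ≤ l := div_nonneg ht hsA.le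
  have key : ∀ ε : Fin n → Bool,
      (if t * Real.sqrt A ≤ ∑ i, stmt7rad (ε i) * a i then (1 : ℝ) else 0) ≤
        Real.exp (l * ((∑ i, stmt7rad (ε i) * a i) - t * Real.sqrt A)) := by
    intro ε
    split
    · next h =>
      have : 0 ≤ l * ((∑ i, stmt7rad (ε i) * a i) - t * Real.sqrt A) :=
        mul_nonneg hl (by linarith)
      calc (1:ℝ) = Real.exp 0 := Real.exp_zero.symm
        _ ≤ _ := Real.exp_le_exp.2 this
    · exact (Real.exp_pos _).le
  calc ∑ ε : Fin n → Bool, (if t * Real.sqrt A ≤ ∑ i, stmt7rad (ε i) * a i then (1:ℝ) else 0)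
      ≤ ∑ ε : Fin n → Bool, Real.exp (l * ((∑ i, stmt7rad (ε i) * a i) - t * Real.sqrt A)) :=
        Finset.sum_le_sum fun ε _ => key ε
    _ = Real.exp (-(l * (t * Real.sqrt A))) *
        ∑ ε : Fin n → Bool, Real.exp (∑ i, l * (stmt7rad (ε i) * a i)) := by
        rw [Finset.mul_sum]
        refine Finset.sum_congr rfl fun ε _ => ?_
        rw [← Real.exp_add]
        congr 1
        rw [← Finset.mul_sum]
        ring
    _ ≤ Real.exp (-(l * (t * Real.sqrt A))) * (2 ^ n * Real.exp (l ^ 2 * A / 2)) := by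
        refine mul_le_mul_of_nonneg_left (stmt7_mgf n a l) (Real.exp_pos _).le
    _ = 2 ^ n * Real.exp (l ^ 2 * A / 2 - l * (t * Real.sqrt A)) := by
        rw [Real.exp_sub, Real.exp_neg]
        field_simp
    _ = 2 ^ n * Real.exp (-(t ^ 2) / 2) := by
        congr 2
        have h1 : l ^ 2 * A = t ^ 2 := by
          rw [hldef, div_pow, Real.sq_sqrt hA.le]
          field_simp
        have h2 : l * (t * Real.sqrt A) = t ^ 2 := by
          rw [hldef]
          field_simp
        rw [h1, h2]; ring

lemma stmt7_count (n : ℕ) (a : Fin n → ℝ) (t : ℝ) (ht : 0 ≤ t) :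
    ∑ ε : Fin n → Bool,
      (if t * Real.sqrt (∑ i, (a i) ^ 2) < |∑ i, stmt7rad (ε i) * a i| then (1 : ℝ) else 0) ≤
      2 ^ n * (2 * Real.exp (-(t ^ 2) / 2)) := by
  rcases eq_or_lt_of_le (Finset.sum_nonneg (fun i (_ : i ∈ univ) => sq_nonneg (a i)) :
      (0:ℝ) ≤ ∑ i, (a i) ^ 2) with hA | hA
  · -- all a i = 0
    have hz : ∀ i, a i = 0 := by
      intro i
      have := (Finset.sum_eq_zero_iff_of_nonneg
        (fun i (_ : i ∈ (univ : Finset (Fin n))) => sq_nonneg (a i))).1 hA.symm i (mem_univ i)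
      exact pow_eq_zero_iff (n := 2) (by norm_num) |>.1 this
    have : ∀ ε : Fin n → Bool,
        (if t * Real.sqrt (∑ i, (a i) ^ 2) < |∑ i, stmt7rad (ε i) * a i| then (1:ℝ) else 0) = 0 := by
      intro ε
      rw [if_neg]
      simp [hz, ← hA, mul_nonneg ht (Real.sqrt_nonneg _)]
    rw [Finset.sum_congr rfl fun ε _ => this ε]
    simp
    positivity
  · have habs : ∀ ε : Fin n → Bool,
        (if t * Real.sqrt (∑ i, (a i) ^ 2) < |∑ i, stmt7rad (ε i) * a i| then (1:ℝ) else 0) ≤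
        (if t * Real.sqrt (∑ i, (a i) ^ 2) ≤ ∑ i, stmt7rad (ε i) * a i then (1:ℝ) else 0) +
        (if t * Real.sqrt (∑ i, (-a i) ^ 2) ≤ ∑ i, stmt7rad (ε i) * (-a i) then (1:ℝ) else 0) := by
      intro ε
      have hsq : ∑ i, (-a i) ^ 2 = ∑ i, (a i) ^ 2 := by simp
      have hneg : ∑ i, stmt7rad (ε i) * (-a i) = -∑ i, stmt7rad (ε i) * a i := by
        rw [← Finset.sum_neg_distrib]
        exact Finset.sum_congr rfl fun i _ => by ring
      rw [hsq, hneg]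
      have ind_nonneg : ∀ c : Prop, ∀ inst : Decidable c, (0:ℝ) ≤ if c then 1 else 0 := by
        intro c inst; split <;> norm_num
      split
      · next hc =>
        rcases le_abs.1 hc.le with h | h
        · rw [if_pos h]
          have := ind_nonneg (t * Real.sqrt (∑ i, (a i) ^ 2) ≤ -∑ i, stmt7rad (ε i) * a i)
            inferInstance
          linarith
        · rw [if_pos h]
          have := ind_nonneg (t * Real.sqrt (∑ i, (a i) ^ 2) ≤ ∑ i, stmt7rad (ε i) * a i)
            inferInstance
          linarith
      · have h1 := ind_nonneg (t * Real.sqrt (∑ i, (a i) ^ 2) ≤ ∑ i, stmt7rad (ε i) * a i)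
          inferInstance
        have h2 := ind_nonneg (t * Real.sqrt (∑ i, (a i) ^ 2) ≤ -∑ i, stmt7rad (ε i) * a i)
          inferInstance
        linarith
    calc _ ≤ _ := Finset.sum_le_sum fun ε _ => habs ε
      _ ≤ 2 ^ n * Real.exp (-(t ^ 2) / 2) + 2 ^ n * Real.exp (-(t ^ 2) / 2) := by
          rw [Finset.sum_add_distrib]
          exact add_le_add (stmt7_one_sided n a t ht hA)
            (stmt7_one_sided n (fun i => -a i) t ht (by simpa using hA))
      _ = 2 ^ n * (2 * Real.exp (-(t ^ 2) / 2)) := by ring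

lemma stmt7rad_mul_self (b : Bool) : stmt7rad b * stmt7rad b = 1 := by
  cases b <;> norm_num [stmt7rad]

lemma stmt7_efron {Ω : Type*} [MeasurableSpace Ω] (P : Measure Ω) [IsProbabilityMeasure P]
    (n : ℕ) (η : Fin n → Ω → ℝ) (hmeas : ∀ i, Measurable (η i))
    (hindep : iIndepFun η P)
    (hsymm : ∀ i, Measure.map (η i) P = Measure.map (fun ω => -(η i ω)) P)
    (t : ℝ) (ht : 0 ≤ t) :
    P {ω | t * Real.sqrt (∑ i, (η i ω) ^ 2) < |∑ i, η i ω|} ≤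
      ENNReal.ofReal (2 * Real.exp (-(t ^ 2) / 2)) := by
  classical
  set μ : Fin n → Measure ℝ := fun i => P.map (η i) with hμ
  haveI : ∀ i, IsProbabilityMeasure (μ i) := fun i =>
    Measure.isProbabilityMeasure_map (hmeas i).aemeasurable
  set ν : Measure (Fin n → ℝ) := Measure.pi μ with hν
  -- vector maps
  have mv : ∀ ε : Fin n → Bool, Measurable (fun ω i => stmt7rad (ε i) * η i ω) := fun ε =>
    measurable_pi_lambda _ (fun i => (hmeas i).const_mul _)
  have hmarg : ∀ (ε : Fin n → Bool) (i : Fin n),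
      P.map (fun ω => stmt7rad (ε i) * η i ω) = μ i := by
    intro ε i
    cases hb : ε i
    · have : (fun ω => stmt7rad false * η i ω) = fun ω => -(η i ω) := by
        funext ω; norm_num [stmt7rad]
      rw [this, ← hsymm i]
    · have : (fun ω => stmt7rad true * η i ω) = η i := by
        funext ω; norm_num [stmt7rad]
      rw [this]
  have hmap : ∀ ε : Fin n → Bool,
      P.map (fun ω i => stmt7rad (ε i) * η i ω) = ν := by
    intro ε
    refine (Measure.pi_eq fun s hs => ?_).symm
    rw [Measure.map_apply (mv ε) (MeasurableSet.univ_pi hs)]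
    have hpre : (fun ω i => stmt7rad (ε i) * η i ω) ⁻¹' Set.pi Set.univ s =
        ⋂ i ∈ Finset.univ, (fun v => stmt7rad (ε i) * v) ∘ η i ⁻¹' s i := by
      ext ω; simp [Set.mem_pi, Function.comp]
    rw [hpre]
    have hind2 := hindep.comp (fun i v => stmt7rad (ε i) * v)
      (fun i => measurable_const_mul _)
    rw [hind2.measure_inter_preimage_eq_mul Finset.univ (fun i _ => hs i)]
    refine Finset.prod_congr rfl fun i _ => ?_
    have : (fun v => stmt7rad (ε i) * v) ∘ η i = fun ω => stmt7rad (ε i) * η i ω := rfl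
    rw [this, ← Measure.map_apply ((hmeas i).const_mul _) (hs i), hmarg ε i]
  -- the sets
  set S : (Fin n → Bool) → Set (Fin n → ℝ) := fun ε =>
    {y | t * Real.sqrt (∑ i, (y i) ^ 2) < |∑ i, stmt7rad (ε i) * y i|} with hS
  have hSmeas : ∀ ε, MeasurableSet (S ε) := by
    intro ε
    apply measurableSet_lt
    · exact (measurable_const.mul ((Finset.measurable_sum Finset.univ
        (fun i _ => (measurable_pi_apply i).pow_const 2)).sqrt))
    · exact (Finset.measurable_sum Finset.univ
        (fun i _ => (measurable_pi_apply i).const_mul _)).abs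
  set B : Set Ω := {ω | t * Real.sqrt (∑ i, (η i ω) ^ 2) < |∑ i, η i ω|} with hB
  have hPB : ∀ ε : Fin n → Bool, P B = ν (S ε) := by
    intro ε
    rw [← hmap ε, Measure.map_apply (mv ε) (hSmeas ε)]
    congr 1
    ext ω
    have e1 : ∑ i, (stmt7rad (ε i) * η i ω) ^ 2 = ∑ i, (η i ω) ^ 2 :=
      Finset.sum_congr rfl fun i _ => by rw [mul_pow, stmt7rad_sq, one_mul]
    have e2 : ∑ i, stmt7rad (ε i) * (stmt7rad (ε i) * η i ω) = ∑ i, η i ω :=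
      Finset.sum_congr rfl fun i _ => by rw [← mul_assoc, stmt7rad_mul_self, one_mul]
    simp only [hB, hS, Set.mem_setOf_eq, Set.mem_preimage, e1, e2]
  -- sum over sign patterns
  have key : (2 ^ n : ℝ≥0∞) * P B ≤ ENNReal.ofReal (2 ^ n * (2 * Real.exp (-(t ^ 2) / 2))) := by
    have hcard : (Finset.univ : Finset (Fin n → Bool)).card = 2 ^ n := by
      simp [Finset.card_univ]
    calc (2 ^ n : ℝ≥0∞) * P B = ∑ ε : Fin n → Bool, ν (S ε) := by
          rw [Finset.sum_congr rfl fun ε _ => (hPB ε).symm, Finset.sum_const, hcard,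
            nsmul_eq_mul]
          norm_num
      _ = ∫⁻ y, ∑ ε : Fin n → Bool, (S ε).indicator (1 : (Fin n → ℝ) → ℝ≥0∞) y ∂ν := by
          rw [lintegral_finset_sum _ (fun ε _ => (measurable_one.indicator (hSmeas ε)))]
          exact Finset.sum_congr rfl fun ε _ => (lintegral_indicator_one (hSmeas ε)).symm
      _ ≤ ∫⁻ _, ENNReal.ofReal (2 ^ n * (2 * Real.exp (-(t ^ 2) / 2))) ∂ν := by
          refine lintegral_mono fun y => ?_
          have : ∑ ε : Fin n → Bool, (S ε).indicator (1 : (Fin n → ℝ) → ℝ≥0∞) y =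
              ENNReal.ofReal (∑ ε : Fin n → Bool,
                (if t * Real.sqrt (∑ i, (y i) ^ 2) < |∑ i, stmt7rad (ε i) * y i|
                  then (1 : ℝ) else 0)) := by
            rw [ENNReal.ofReal_sum_of_nonneg (fun ε _ => by split <;> norm_num)]
            refine Finset.sum_congr rfl fun ε _ => ?_
            rw [Set.indicator_apply, Pi.one_apply]
            by_cases hy : y ∈ S ε
            · rw [if_pos hy, if_pos (show t * Real.sqrt (∑ i, (y i) ^ 2) <
                |∑ i, stmt7rad (ε i) * y i| from hy), ENNReal.ofReal_one]
            · rw [if_neg hy, if_neg (show ¬ t * Real.sqrt (∑ i, (y i) ^ 2) <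
                |∑ i, stmt7rad (ε i) * y i| from hy), ENNReal.ofReal_zero]
          rw [this]
          exact ENNReal.ofReal_le_ofReal (stmt7_count n y t ht)
      _ = ENNReal.ofReal (2 ^ n * (2 * Real.exp (-(t ^ 2) / 2))) := by
          rw [lintegral_const, measure_univ, mul_one]
  have h2n : ENNReal.ofReal (2 ^ n * (2 * Real.exp (-(t ^ 2) / 2))) =
      (2 ^ n : ℝ≥0∞) * ENNReal.ofReal (2 * Real.exp (-(t ^ 2) / 2)) := by
    rw [ENNReal.ofReal_mul (by positivity)]
    congr 1
    rw [ENNReal.ofReal_pow (by norm_num)]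
    norm_num
  rw [h2n] at key
  exact (ENNReal.mul_le_mul_iff_right (by positivity) (by simp)).1 key

theorem stmt7 {Ω : Type*} [MeasurableSpace Ω] (P : Measure Ω)
    [IsProbabilityMeasure P] (n p : ℕ) (hn : 0 < n) (hp : 0 < p)
    (x : Fin p → Fin n → Ω → ℝ) (u : Fin n → Ω → ℝ)
    (hmeas : ∀ k i, Measurable (fun ω => x k i ω * u i ω))
    (hindep : ∀ k, iIndepFun
      (fun i ω => x k i ω * u i ω) P)
    (hsymm : ∀ k i, Measure.map (fun ω => x k i ω * u i ω) P =
      Measure.map (fun ω => -(x k i ω * u i ω)) P)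
    (d : Fin p → ℝ) (hd : ∀ k, 0 < d k)
    (α : ℝ) (hα : 0 < α) (hα1 : α < 1)
    (r : ℝ) (hr : r = Real.sqrt (2 * Real.log (4 * p / α) / n)) :
    ENNReal.ofReal (1 - α / 2) ≤
      P {ω | ∀ k, |(d k / n) * ∑ i, x k i ω * u i ω| ≤
        r * Real.sqrt (⨆ j, (d j) ^ 2 / n * ∑ i, (x j i ω) ^ 2 * (u i ω) ^ 2)} := by
  classical
  have hn' : (0 : ℝ) < n := by exact_mod_cast hn
  have hp' : (0 : ℝ) < p := by exact_mod_cast hp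
  set t : ℝ := Real.sqrt (2 * Real.log (4 * p / α)) with hT
  have hcpos : (0 : ℝ) < 4 * p / α := by positivity
  have hc1 : (1 : ℝ) ≤ 4 * p / α := by
    have hp1 : (1:ℝ) ≤ (p:ℝ) := by exact_mod_cast hp
    rw [le_div_iff₀ hα]
    nlinarith
  have hlog : 0 ≤ Real.log (4 * p / α) := Real.log_nonneg hc1
  have ht : 0 ≤ t := Real.sqrt_nonneg _
  have hr0 : 0 ≤ r := hr ▸ Real.sqrt_nonneg _
  have hsn : (0:ℝ) < Real.sqrt n := Real.sqrt_pos.2 hn'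
  have hrt : r * Real.sqrt n = t := by
    rw [hr, hT, ← Real.sqrt_mul (by positivity), div_mul_cancel₀]
    exact hn'.ne'
  -- bad events
  set A : Fin p → Set Ω := fun k =>
    {ω | t * Real.sqrt (∑ i, (x k i ω * u i ω) ^ 2) < |∑ i, x k i ω * u i ω|} with hA
  have hAmeas : ∀ k, MeasurableSet (A k) := by
    intro k
    apply measurableSet_lt
    · exact measurable_const.mul ((Finset.measurable_sum Finset.univ
        (fun i _ => (hmeas k i).pow_const 2)).sqrt)
    · exact (Finset.measurable_sum Finset.univ (fun i _ => hmeas k i)).abs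
  have hbad : ∀ k, P (A k) ≤ ENNReal.ofReal (α / (2 * p)) := by
    intro k
    have h1 := stmt7_efron P n (fun i ω => x k i ω * u i ω) (hmeas k) (hindep k)
      (hsymm k) t ht
    refine h1.trans_eq ?_
    congr 1
    have ht2 : t ^ 2 = 2 * Real.log (4 * p / α) := Real.sq_sqrt (by positivity)
    rw [ht2]
    have : -(2 * Real.log (4 * p / α)) / 2 = -Real.log (4 * p / α) := by ring
    rw [this, Real.exp_neg, Real.exp_log hcpos]
    field_simp
    ring
  have hunion : P (⋃ k, A k) ≤ ENNReal.ofReal (α / 2) := by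
    calc P (⋃ k, A k) ≤ ∑' k, P (A k) := measure_iUnion_le _
      _ = ∑ k, P (A k) := tsum_fintype _
      _ ≤ ∑ _k : Fin p, ENNReal.ofReal (α / (2 * p)) :=
          Finset.sum_le_sum fun k _ => hbad k
      _ = ENNReal.ofReal (α / 2) := by
          rw [Finset.sum_const, Finset.card_univ, Fintype.card_fin, nsmul_eq_mul,
            ← ENNReal.ofReal_natCast p, ← ENNReal.ofReal_mul (by positivity)]
          congr 1
          field_simp
  have hinter : ENNReal.ofReal (1 - α / 2) ≤ P (⋂ k, (A k)ᶜ) := by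
    have hms : MeasurableSet (⋃ k, A k) := MeasurableSet.iUnion fun k => hAmeas k
    have heq : P (⋂ k, (A k)ᶜ) = 1 - P (⋃ k, A k) := by
      rw [← Set.compl_iUnion, prob_compl_eq_one_sub hms]
    rw [heq]
    have h2 : ENNReal.ofReal (1 - α / 2) = 1 - ENNReal.ofReal (α / 2) := by
      rw [ENNReal.ofReal_sub _ (by positivity), ENNReal.ofReal_one]
    rw [h2]
    exact tsub_le_tsub_left hunion 1
  refine hinter.trans (measure_mono ?_)
  intro ω hω
  simp only [Set.mem_iInter, Set.mem_compl_iff, hA, Set.mem_setOf_eq, not_lt] at hω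
  intro k
  set V : Fin p → ℝ := fun j => ∑ i, (x j i ω * u i ω) ^ 2 with hV
  have hVnn : ∀ j, 0 ≤ V j := fun j => Finset.sum_nonneg fun i _ => sq_nonneg _
  have hWV : ∀ j, ∑ i, (x j i ω) ^ 2 * (u i ω) ^ 2 = V j :=
    fun j => Finset.sum_congr rfl fun i _ => (mul_pow _ _ 2).symm
  have hdk := hd k
  have step1 : |(d k / n) * ∑ i, x k i ω * u i ω| ≤ (d k / n) * (t * Real.sqrt (V k)) := by
    rw [abs_mul, abs_of_pos (by positivity : (0:ℝ) < d k / n)]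
    exact mul_le_mul_of_nonneg_left (hω k) (by positivity)
  have step2 : (d k / n) * (t * Real.sqrt (V k)) = r * Real.sqrt (d k ^ 2 / n * V k) := by
    rw [Real.sqrt_mul (by positivity), Real.sqrt_div (sq_nonneg _), Real.sqrt_sq hdk.le,
      ← hrt]
    have hmm : Real.sqrt (n:ℝ) * Real.sqrt (n:ℝ) = (n:ℝ) := Real.mul_self_sqrt hn'.le
    field_simp
    linear_combination (r * Real.sqrt (V k)) * hmm
  have step3 : d k ^ 2 / n * V k ≤ ⨆ j, d j ^ 2 / n * ∑ i, (x j i ω) ^ 2 * (u i ω) ^ 2 := by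
    have hb : BddAbove (Set.range fun j => d j ^ 2 / n * ∑ i, (x j i ω) ^ 2 * (u i ω) ^ 2) :=
      (Set.finite_range _).bddAbove
    have := le_ciSup hb k
    rwa [hWV k] at this
  calc |(d k / n) * ∑ i, x k i ω * u i ω| ≤ (d k / n) * (t * Real.sqrt (V k)) := step1
    _ = r * Real.sqrt (d k ^ 2 / n * V k) := step2
    _ ≤ r * Real.sqrt (⨆ j, d j ^ 2 / n * ∑ i, (x j i ω) ^ 2 * (u i ω) ^ 2) :=
        mul_le_mul_of_nonneg_left (Real.sqrt_le_sqrt step3) hr0
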